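/- For |q| > 1 (equivalently, substituting q^{-1} with |q^{-1}|<1) and any complex numbers c, t, the infinite product ∏_{j≥1} (1 - c t q^{-j}) equals the sum ∑_{m≥0} (ct)^m / (q;q)_m, where (q;q)_m = (1-q)(1-q^2)···(1-q^m). -/

import Mathlib

open Finset Filter Complex Topology

/-- The q-Pochhammer symbol `(q;q)_m = (1-q)(1-q^2)⋯(1-q^m)`. -/
noncomputable def qqPoch (q : ℂ) (m : ℕ) : ℂ := ∏ i ∈ Finset.range m, (1 - q ^ (i + 1))
def euTri : ℕ → ℕ
  | 0 => 0
  | m + 1 => euTri m + (m + 1)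

noncomputable def euC (p : ℂ) : ℕ → ℕ → ℂ
  | 0, 0 => 1
  | 0, _ + 1 => 0
  | _ + 1, 0 => 1
  | N + 1, m + 1 => euC p N (m + 1) - p ^ (N + 1) * euC p N m

lemma euC_zero (p : ℂ) (N : ℕ) : euC p N 0 = 1 := by cases N <;> rfl

lemma qqPoch_zero (p : ℂ) : qqPoch p 0 = 1 := by simp [qqPoch]

lemma euC_eq_zero (p : ℂ) : ∀ N m : ℕ, N < m → euC p N m = 0 := by
  intro N
  induction N with
  | zero =>
      intro m h
      cases m with
      | zero => omega
      | succ m => rfl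
  | succ N ih =>
      intro m h
      cases m with
      | zero => omega
      | succ m =>
          show euC p N (m + 1) - p ^ (N + 1) * euC p N m = 0
          rw [ih (m + 1) (by omega), ih m (by omega)]
          ring

lemma qqPoch_succ (p : ℂ) (n : ℕ) :
    qqPoch p (n + 1) = qqPoch p n * (1 - p ^ (n + 1)) :=
  Finset.prod_range_succ _ _

lemma euC_prod (p x : ℂ) : ∀ N : ℕ,
    ∏ j ∈ range N, (1 - x * p ^ (j + 1)) = ∑ m ∈ range (N + 1), euC p N m * x ^ m := by
  intro N
  induction N with
  | zero => simp [euC]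
  | succ N ih =>
      rw [Finset.prod_range_succ, ih]
      rw [Finset.sum_range_succ' (fun m => euC p (N + 1) m * x ^ m) (N + 1)]
      have hdef : ∀ i : ℕ, euC p (N + 1) (i + 1) = euC p N (i + 1) - p ^ (N + 1) * euC p N i :=
        fun i => rfl
      simp only [hdef, euC_zero, pow_zero, mul_one, sub_mul]
      rw [Finset.sum_sub_distrib]
      have h1 : ∑ i ∈ range (N + 1), euC p N (i + 1) * x ^ (i + 1)
          = (∑ m ∈ range (N + 1), euC p N m * x ^ m) - 1 + euC p N (N + 1) * x ^ (N + 1) := by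
        rw [Finset.sum_range_succ (fun i => euC p N (i + 1) * x ^ (i + 1)) N,
          Finset.sum_range_succ' (fun m => euC p N m * x ^ m) N]
        simp [euC_zero]
      rw [h1, euC_eq_zero p N (N + 1) (by omega)]
      have h2 : ∑ i ∈ range (N + 1), p ^ (N + 1) * euC p N i * x ^ (i + 1)
          = p ^ (N + 1) * x * ∑ m ∈ range (N + 1), euC p N m * x ^ m := by
        rw [Finset.mul_sum]
        exact Finset.sum_congr rfl fun i _ => by ring
      rw [h2]
      ring

lemma euC_closed (p : ℂ) : ∀ N m k : ℕ, m + k = N →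
    euC p N m * (qqPoch p m * qqPoch p k)
      = (-1) ^ m * p ^ euTri m * qqPoch p N := by
  intro N
  induction N with
  | zero =>
      rintro m k h
      obtain ⟨rfl, rfl⟩ : m = 0 ∧ k = 0 := by omega
      simp [euC, qqPoch, euTri]
  | succ N ih =>
      intro m k h
      cases m with
      | zero =>
          obtain rfl : k = N + 1 := by omega
          simp [euC_zero, qqPoch_zero, euTri]
      | succ m =>
          cases k with
          | zero =>
              obtain rfl : N = m := by omega
              have hz : euC p N (N + 1) = 0 := euC_eq_zero p N (N + 1) (by omega)
              have ihm := ih N 0 (by omega)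
              rw [qqPoch_zero] at ihm
              show (euC p N (N + 1) - p ^ (N + 1) * euC p N N) *
                  (qqPoch p (N + 1) * qqPoch p 0) = _
              rw [hz, qqPoch_zero, qqPoch_succ p N,
                show euTri (N + 1) = euTri N + (N + 1) from rfl, pow_add]
              linear_combination (-(p ^ (N + 1)) * (1 - p ^ (N + 1))) * ihm
          | succ k =>
              obtain rfl : N = m + 1 + k := by omega
              have ih1 := ih (m + 1) k rfl
              have ih2 := ih m (k + 1) (by omega)
              show (euC p (m + 1 + k) (m + 1) - p ^ (m + 1 + k + 1) * euC p (m + 1 + k) m) *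
                  (qqPoch p (m + 1) * qqPoch p (k + 1)) = _
              rw [qqPoch_succ p m, qqPoch_succ p k, qqPoch_succ p (m + 1 + k),
                show euTri (m + 1) = euTri m + (m + 1) from rfl, pow_add] at *
              linear_combination (1 - p ^ (k + 1)) * ih1
                - p ^ (m + 1 + k + 1) * (1 - p ^ (m + 1)) * ih2
section bounds

lemma eu_geo {r : ℝ} (h0 : 0 ≤ r) (h1 : r < 1) (n : ℕ) : ∑ i ∈ range n, r ^ (i + 1) ≤ r / (1 - r) := by
  have hsum : Summable (fun i : ℕ => r ^ (i + 1)) := by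
    apply Summable.comp_injective (summable_geometric_of_lt_one h0 h1)
    exact add_left_injective 1
  calc ∑ i ∈ range n, r ^ (i + 1) ≤ ∑' i : ℕ, r ^ (i + 1) :=
        Summable.sum_le_tsum (range n) (fun i _ => pow_nonneg h0 _) hsum
    _ = r / (1 - r) := by
        have h2 : ∑' i : ℕ, r ^ (i + 1) = r * ∑' i : ℕ, r ^ i := by
          rw [← tsum_mul_left]
          exact tsum_congr fun i => by rw [pow_succ, mul_comm]
        rw [h2, tsum_geometric_of_lt_one h0 h1]
        rw [div_eq_mul_inv]
    _ ≤ r / (1 - r) := le_refl _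

lemma eu_one_sub_ge {r a : ℝ} (ha0 : 0 ≤ a) (har : a ≤ r) (h1 : r < 1) :
    Real.exp (-(a / (1 - r))) ≤ 1 - a := by
  have h1a : 0 < 1 - a := by linarith
  have h1r : 0 < 1 - r := by linarith
  have e1 : 1 / (1 - a) ≤ Real.exp (a / (1 - a)) := by
    have h := Real.add_one_le_exp (a / (1 - a))
    have h2 : a / (1 - a) + 1 = 1 / (1 - a) := by
      field_simp
      ring
    linarith
  have e2 : a / (1 - a) ≤ a / (1 - r) := by gcongr
  have e3 : Real.exp (-(a / (1 - r))) ≤ Real.exp (-(a / (1 - a))) := by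
    apply Real.exp_le_exp.mpr; linarith
  refine e3.trans ?_
  rw [Real.exp_neg]
  rw [inv_le_comm₀ (Real.exp_pos _) h1a]
  rwa [one_div] at e1
end bounds

section normbounds
variable {p : ℂ}

lemma eu_qqPoch_ne_zero (hp : ‖p‖ < 1) (n : ℕ) : qqPoch p n ≠ 0 := by
  apply Finset.prod_ne_zero_iff.mpr
  intro i _
  intro h
  have : ‖p ^ (i + 1)‖ < 1 := by
    rw [norm_pow]
    exact pow_lt_one₀ (norm_nonneg p) hp (Nat.succ_ne_zero i)
  rw [sub_eq_zero] at h
  rw [← h] at this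
  simp at this

lemma eu_qqPoch_norm_le (hp : ‖p‖ < 1) (n : ℕ) : ‖qqPoch p n‖ ≤ Real.exp (‖p‖ / (1 - ‖p‖)) := by
  have h0 : (0:ℝ) ≤ ‖p‖ := norm_nonneg p
  rw [qqPoch, norm_prod]
  calc ∏ i ∈ range n, ‖1 - p ^ (i + 1)‖
      ≤ ∏ i ∈ range n, Real.exp (‖p‖ ^ (i + 1)) := by
        apply Finset.prod_le_prod (fun i _ => norm_nonneg _)
        intro i _
        calc ‖1 - p ^ (i + 1)‖ ≤ ‖(1:ℂ)‖ + ‖p ^ (i + 1)‖ := norm_sub_le _ _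
          _ = 1 + ‖p‖ ^ (i + 1) := by rw [norm_one, norm_pow]
          _ ≤ Real.exp (‖p‖ ^ (i + 1)) := by
              have := Real.add_one_le_exp (‖p‖ ^ (i + 1)); linarith
    _ = Real.exp (∑ i ∈ range n, ‖p‖ ^ (i + 1)) := (Real.exp_sum _ _).symm
    _ ≤ Real.exp (‖p‖ / (1 - ‖p‖)) := Real.exp_le_exp.mpr (eu_geo h0 hp n)

lemma eu_qqPoch_norm_ge (hp : ‖p‖ < 1) (n : ℕ) :
    Real.exp (-(‖p‖ / (1 - ‖p‖) / (1 - ‖p‖))) ≤ ‖qqPoch p n‖ := by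
  have h0 : (0:ℝ) ≤ ‖p‖ := norm_nonneg p
  have h1r : (0:ℝ) < 1 - ‖p‖ := by linarith
  rw [qqPoch, norm_prod]
  calc Real.exp (-(‖p‖ / (1 - ‖p‖) / (1 - ‖p‖)))
      ≤ Real.exp (-(∑ i ∈ range n, ‖p‖ ^ (i + 1)) / (1 - ‖p‖)) := by
        apply Real.exp_le_exp.mpr
        rw [neg_div]
        apply neg_le_neg
        gcongr
        exact eu_geo h0 hp n
    _ = ∏ i ∈ range n, Real.exp (-(‖p‖ ^ (i + 1) / (1 - ‖p‖))) := by
        rw [← Real.exp_sum]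
        congr 1
        rw [neg_div, Finset.sum_div]
        simp [neg_div]
    _ ≤ ∏ i ∈ range n, ‖1 - p ^ (i + 1)‖ := by
        apply Finset.prod_le_prod (fun i _ => (Real.exp_pos _).le)
        intro i _
        have key : Real.exp (-(‖p‖ ^ (i + 1) / (1 - ‖p‖))) ≤ 1 - ‖p‖ ^ (i + 1) :=
          eu_one_sub_ge (pow_nonneg h0 _)
            (pow_le_of_le_one h0 hp.le (Nat.succ_ne_zero i)) hp
        refine key.trans ?_
        calc 1 - ‖p‖ ^ (i + 1) = ‖(1:ℂ)‖ - ‖p ^ (i + 1)‖ := by rw [norm_one, norm_pow]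
          _ ≤ ‖1 - p ^ (i + 1)‖ := norm_sub_norm_le _ _
end normbounds

lemma eu_qqPoch_inv (q : ℂ) (hq0 : q ≠ 0) (m : ℕ) :
    qqPoch q m = (-1) ^ m * q ^ euTri m * qqPoch q⁻¹ m := by
  induction m with
  | zero => simp [qqPoch_zero, euTri]
  | succ m ih =>
      rw [qqPoch_succ, qqPoch_succ, ih,
        show euTri (m + 1) = euTri m + (m + 1) from rfl, pow_add]
      have h1 : (q⁻¹) ^ (m + 1) = (q ^ (m + 1))⁻¹ := inv_pow q (m + 1)
      have h2 : q ^ (m + 1) ≠ 0 := pow_ne_zero _ hq0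
      rw [h1]
      field_simp
      ring

lemma eu_summable_pow {r : ℝ} (h0 : 0 ≤ r) (h1 : r < 1) :
    Summable (fun i : ℕ => r ^ (i + 1)) := by
  have := (summable_geometric_of_lt_one h0 h1).mul_left r
  refine this.congr fun i => ?_
  rw [pow_succ, mul_comm]

/-- Euler's q-exponential identity: for `|q| > 1` and any `c, t ∈ ℂ`,
`∏_{j≥1} (1 - c t q^{-j}) = ∑_{m≥0} (ct)^m / (q;q)_m`. -/
theorem euler_qexp (q c t : ℂ) (hq : 1 < ‖q‖) :
    ∏' j : ℕ, (1 - c * t * (q ^ (j + 1))⁻¹) = ∑' m : ℕ, (c * t) ^ m / qqPoch q m := by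
  set x := c * t with hx
  set p := q⁻¹ with hpdef
  have hqn : 1 < ‖q‖ := hq
  have hq0 : q ≠ 0 := by
    intro h; rw [h] at hqn; norm_num at hqn
  have hp : ‖p‖ < 1 := by
    rw [hpdef, norm_inv]
    exact inv_lt_one_of_one_lt₀ hqn
  have h0 : (0:ℝ) ≤ ‖p‖ := norm_nonneg p
  have hQ : ∀ n, qqPoch p n ≠ 0 := eu_qqPoch_ne_zero hp
  have hfac : ∀ j : ℕ, 1 - c * t * (q ^ (j + 1))⁻¹ = 1 - x * p ^ (j + 1) := by
    intro j; rw [hpdef, inv_pow]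
  rw [tprod_congr hfac]
  set g : ℕ → ℂ := fun m => ((-1) ^ m * p ^ euTri m / qqPoch p m) * x ^ m with hg
  set f : ℕ → ℕ → ℂ := fun N m => euC p N m * x ^ m with hf
  -- partial products as tsums
  have hEq : ∀ N : ℕ, ∏ j ∈ range N, (1 - x * p ^ (j + 1)) = ∑' m : ℕ, f N m := by
    intro N
    rw [euC_prod]
    refine (tsum_eq_sum fun m hm => ?_).symm
    have hNm : N < m := by simpa using hm
    simp [hf, euC_eq_zero p N m hNm]
  -- factor form of coefficients
  have hfact : ∀ m k : ℕ, euC p (m + k) m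
      = ((-1) ^ m * p ^ euTri m / qqPoch p m) * ∏ i ∈ range m, (1 - p ^ (k + i + 1)) := by
    intro m k
    have hsplit : qqPoch p (m + k) = qqPoch p k * ∏ i ∈ range m, (1 - p ^ (k + i + 1)) := by
      rw [qqPoch, add_comm m k, Finset.prod_range_add]
      rfl
    have hc := euC_closed p (m + k) m k rfl
    rw [hsplit] at hc
    rw [div_mul_eq_mul_div, eq_div_iff (hQ m)]
    apply mul_right_cancel₀ (hQ k)
    linear_combination hc
  -- pointwise limits
  have hlim : ∀ m : ℕ, Tendsto (fun N => f N m) atTop (𝓝 (g m)) := by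
    intro m
    have hpow : ∀ i : ℕ, Tendsto (fun N : ℕ => p ^ (N - m + i + 1)) atTop (𝓝 0) := by
      intro i
      have h' : Tendsto (fun K : ℕ => p ^ K) atTop (𝓝 0) :=
        tendsto_pow_atTop_nhds_zero_of_norm_lt_one hp
      exact h'.comp (tendsto_atTop_mono (fun N => by omega) (tendsto_sub_atTop_nat m))
    have hprod : Tendsto (fun N : ℕ => ∏ i ∈ range m, (1 - p ^ (N - m + i + 1))) atTop
        (𝓝 (∏ _i ∈ range m, (1:ℂ))) := by
      apply tendsto_finset_prod
      intro i _
      simpa using (tendsto_const_nhds.sub (hpow i))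
    have hev : (fun N : ℕ => ((-1) ^ m * p ^ euTri m / qqPoch p m)
        * (∏ i ∈ range m, (1 - p ^ (N - m + i + 1))) * x ^ m) =ᶠ[atTop] fun N => f N m := by
      filter_upwards [eventually_ge_atTop m] with N hN
      have hNm : m + (N - m) = N := by omega
      have := hfact m (N - m)
      rw [hNm] at this
      rw [hf]
      simp only [this]
    refine Tendsto.congr' hev ?_
    have hcm : Tendsto (fun _ : ℕ => ((-1:ℂ)) ^ m * p ^ euTri m / qqPoch p m) atTop
        (𝓝 ((-1) ^ m * p ^ euTri m / qqPoch p m)) := tendsto_const_nhds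
    have hxm : Tendsto (fun _ : ℕ => x ^ m) atTop (𝓝 (x ^ m)) := tendsto_const_nhds
    have := (hcm.mul hprod).mul hxm
    simpa [hg] using this
  -- uniform bound
  set C : ℝ := Real.exp (‖p‖ / (1 - ‖p‖)) with hCdef
  set D : ℝ := Real.exp (-(‖p‖ / (1 - ‖p‖) / (1 - ‖p‖))) with hDdef
  have hD : 0 < D := Real.exp_pos _
  have hbd : ∀ N m : ℕ, ‖f N m‖ ≤ C / (D * D) * (‖p‖ ^ euTri m * ‖x‖ ^ m) := by
    intro N m
    rcases le_or_gt m N with h | h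
    · obtain ⟨k, rfl⟩ : ∃ k, N = m + k := ⟨N - m, by omega⟩
      have hc := euC_closed p (m + k) m k rfl
      have hform : euC p (m + k) m
          = ((-1) ^ m * p ^ euTri m * qqPoch p (m + k)) / (qqPoch p m * qqPoch p k) := by
        rw [eq_div_iff (mul_ne_zero (hQ m) (hQ k))]
        linear_combination hc
      have hnorm : ‖f (m + k) m‖
          = ‖p‖ ^ euTri m * ‖x‖ ^ m * ‖qqPoch p (m + k)‖ / (‖qqPoch p m‖ * ‖qqPoch p k‖) := by
        rw [hf]
        simp only [hform, norm_mul, norm_div, norm_pow, norm_neg, norm_one, one_pow]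
        ring
      rw [hnorm]
      rw [div_mul_eq_mul_div C (D * D)]
      have hnum : ‖p‖ ^ euTri m * ‖x‖ ^ m * ‖qqPoch p (m + k)‖
          ≤ C * (‖p‖ ^ euTri m * ‖x‖ ^ m) := by
        calc ‖p‖ ^ euTri m * ‖x‖ ^ m * ‖qqPoch p (m + k)‖
            ≤ ‖p‖ ^ euTri m * ‖x‖ ^ m * C := by
              gcongr
              exact eu_qqPoch_norm_le hp (m + k)
          _ = C * (‖p‖ ^ euTri m * ‖x‖ ^ m) := by ring
      have hden : D * D ≤ ‖qqPoch p m‖ * ‖qqPoch p k‖ :=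
        mul_le_mul (eu_qqPoch_norm_ge hp m) (eu_qqPoch_norm_ge hp k) hD.le (norm_nonneg _)
      exact div_le_div₀ (by positivity) hnum (by positivity) hden
    · rw [hf]
      simp only [euC_eq_zero p N m h, zero_mul, norm_zero]
      positivity
  -- summability of the bound
  have hbsum : Summable (fun m : ℕ => C / (D * D) * (‖p‖ ^ euTri m * ‖x‖ ^ m)) := by
    apply Summable.mul_left
    apply summable_of_ratio_norm_eventually_le (show (1:ℝ)/2 < 1 by norm_num)
    have htend : Tendsto (fun m : ℕ => ‖p‖ ^ (m + 1) * ‖x‖) atTop (𝓝 0) := by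
      have h' : Tendsto (fun K : ℕ => ‖p‖ ^ K) atTop (𝓝 0) :=
        tendsto_pow_atTop_nhds_zero_of_lt_one h0 hp
      have := (h'.comp (tendsto_add_atTop_nat 1)).mul_const ‖x‖
      simpa using this
    filter_upwards [htend.eventually_lt_const (by norm_num : (0:ℝ) < 1/2)] with m hm
    rw [Real.norm_eq_abs, Real.norm_eq_abs, _root_.abs_of_nonneg (by positivity),
      _root_.abs_of_nonneg (by positivity)]
    calc ‖p‖ ^ euTri (m + 1) * ‖x‖ ^ (m + 1)
        = (‖p‖ ^ (m + 1) * ‖x‖) * (‖p‖ ^ euTri m * ‖x‖ ^ m) := by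
          rw [show euTri (m + 1) = euTri m + (m + 1) from rfl, pow_add, pow_succ]
          ring
      _ ≤ 1 / 2 * (‖p‖ ^ euTri m * ‖x‖ ^ m) := by
          apply mul_le_mul_of_nonneg_right hm.le (by positivity)
  -- dominated convergence
  have hRHS : Tendsto (fun N => ∑' m, f N m) atTop (𝓝 (∑' m, g m)) :=
    tendsto_tsum_of_dominated_convergence hbsum hlim (Eventually.of_forall hbd)
  -- multipliability of LHS
  have hmult : Multipliable (fun j : ℕ => 1 - x * p ^ (j + 1)) := by
    by_cases hex : ∃ j : ℕ, 1 - x * p ^ (j + 1) = 0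
    · obtain ⟨j0, hj0⟩ := hex
      refine ⟨0, ?_⟩
      have hev : (fun _ : Finset ℕ => (0:ℂ)) =ᶠ[atTop]
          (fun s : Finset ℕ => ∏ j ∈ s, (1 - x * p ^ (j + 1))) := by
        filter_upwards [eventually_ge_atTop ({j0} : Finset ℕ)] with s hs
        exact (Finset.prod_eq_zero (i := j0) (Finset.singleton_subset_iff.mp hs) hj0).symm
      exact tendsto_const_nhds.congr' hev
    · push_neg at hex
      apply Complex.multipliable_of_summable_log
      have htend : Tendsto (fun j : ℕ => ‖x * p ^ (j + 1)‖) atTop (𝓝 0) := by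
        have h' : Tendsto (fun K : ℕ => ‖p‖ ^ K) atTop (𝓝 0) :=
          tendsto_pow_atTop_nhds_zero_of_lt_one h0 hp
        have := ((h'.comp (tendsto_add_atTop_nat 1)).mul_const ‖x‖)
        simp only [norm_mul, norm_pow]
        simpa [mul_comm] using this
      apply Summable.of_norm_bounded_eventually_nat (g := fun j => 3/2 * (‖x‖ * ‖p‖ ^ (j + 1)))
      · exact ((eu_summable_pow h0 hp).mul_left ‖x‖).mul_left (3/2)
      · filter_upwards [htend.eventually_le_const (by norm_num : (0:ℝ) < 1/2)] with j hj
        have hb := Complex.norm_log_one_add_half_le_self (z := -(x * p ^ (j + 1)))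
          (by simpa using hj)
        rw [show (1 : ℂ) + -(x * p ^ (j + 1)) = 1 - x * p ^ (j + 1) by ring] at hb
        simpa [norm_mul, norm_pow] using hb
  have hLHS := hmult.hasProd.tendsto_prod_nat
  have hfinal : ∏' j : ℕ, (1 - x * p ^ (j + 1)) = ∑' m, g m :=
    tendsto_nhds_unique (hLHS.congr hEq) hRHS
  rw [hfinal]
  apply tsum_congr
  intro m
  have hqq : qqPoch q m = (-1) ^ m * q ^ euTri m * qqPoch p m := eu_qqPoch_inv q hq0 m
  have hne : qqPoch q m ≠ 0 := by
    rw [hqq]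
    exact mul_ne_zero (mul_ne_zero (pow_ne_zero _ (by norm_num)) (pow_ne_zero _ hq0)) (hQ m)
  rw [hqq, eq_comm, div_eq_iff (by rw [← hqq]; exact hne)]
  have hApow : p ^ euTri m * q ^ euTri m = 1 := by
    rw [hpdef, inv_pow, inv_mul_cancel₀ (pow_ne_zero _ hq0)]
  have hsq : ((-1:ℂ)) ^ m * (-1) ^ m = 1 := by
    rw [← mul_pow]; norm_num
  show x ^ m = ((-1) ^ m * p ^ euTri m / qqPoch p m * x ^ m) * ((-1) ^ m * q ^ euTri m * qqPoch p m)
  have expand : ((-1) ^ m * p ^ euTri m / qqPoch p m * x ^ m)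
        * ((-1) ^ m * q ^ euTri m * qqPoch p m)
      = (((-1:ℂ)) ^ m * (-1) ^ m) * (p ^ euTri m * q ^ euTri m)
        * (qqPoch p m / qqPoch p m) * x ^ m := by ring
  rw [expand, div_self (hQ m), hApow, hsq]
  ring
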